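/- Let G be a finite connected simple graph on n vertices with maximum degree Δ. Then aut(G) ≤ n · Δ! · (Δ − 1)^{n − Δ − 1}. -/

import Mathlib

open Finset

/-- A graph isomorphism preserves degrees. -/
lemma aut_degree_eq {V : Type*} [Fintype V] (G : SimpleGraph V) [DecidableRel G.Adj]
    (φ : G ≃g G) (w : V) : G.degree (φ w) = G.degree w := by
  rw [← SimpleGraph.card_neighborSet_eq_degree, ← SimpleGraph.card_neighborSet_eq_degree]
  exact (Fintype.card_congr (φ.mapNeighborSet w)).symm

/-- For a finite connected simple graph `G` on `n` vertices with
maximum degree `Δ`, `aut(G) ≤ n · Δ! · (Δ − 1) ^ (n − Δ − 1)`. -/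
theorem aut_le_of_connected {V : Type*} [Fintype V] (G : SimpleGraph V) [DecidableRel G.Adj]
    (hG : G.Connected) :
    Nat.card (G ≃g G) ≤
      Fintype.card V * Nat.factorial G.maxDegree *
        (G.maxDegree - 1) ^ (Fintype.card V - G.maxDegree - 1) := by
  classical
  have hne : Nonempty V := hG.nonempty
  have hmemNF : ∀ (a w : V), w ∈ G.neighborFinset a ↔ G.Adj a w :=
    fun a w => SimpleGraph.mem_neighborFinset _ _ _
  obtain ⟨v0, hv0⟩ := G.exists_maximal_degree_vertex
  set Δ := G.maxDegree with hΔ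
  -- parent: every vertex other than v0 has a neighbor one step closer to v0
  have hpar : ∀ u : V, u ≠ v0 → ∃ w : V, G.Adj w u ∧ G.dist w v0 + 1 = G.dist u v0 := by
    intro u hu
    have h0 : G.dist u v0 ≠ 0 := by
      rw [SimpleGraph.dist_ne_zero_iff_ne_and_reachable]
      exact ⟨hu, hG u v0⟩
    obtain ⟨p, hp⟩ := SimpleGraph.exists_walk_of_dist_ne_zero h0
    cases p with
    | nil => simp at hp; exact absurd SimpleGraph.dist_self h0
    | @cons _ w _ hadj q =>
      refine ⟨w, hadj.symm, ?_⟩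
      have h1 : G.dist w v0 ≤ q.length := SimpleGraph.dist_le q
      have h2 : G.dist u v0 ≤ G.dist u w + G.dist w v0 := hG.dist_triangle
      have h3 : G.dist u w ≤ 1 := by
        have := SimpleGraph.dist_le (SimpleGraph.Walk.cons hadj SimpleGraph.Walk.nil)
        simpa using this
      have h4 : q.length + 1 = G.dist u v0 := by simpa using hp
      omega
  choose par hparAdj hparDist using hpar
  -- the set of vertices outside the closed neighborhood of v0
  set S : Finset V := insert v0 (G.neighborFinset v0) with hS
  -- data for vertices outside S
  have hTprop : ∀ u : V, u ∈ Sᶜ → ∃ a b : V, G.Adj a u ∧ G.Adj b a ∧ b ≠ u ∧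
      G.dist a v0 + 1 = G.dist u v0 ∧ G.dist b v0 + 2 = G.dist u v0 := by
    intro u hu
    rw [mem_compl, hS, mem_insert, not_or, hmemNF] at hu
    obtain ⟨hu1, hu2⟩ := hu
    have hd2 : 2 ≤ G.dist u v0 := by
      have h0 : G.dist u v0 ≠ 0 := by
        rw [SimpleGraph.dist_ne_zero_iff_ne_and_reachable]; exact ⟨hu1, hG u v0⟩
      have h1 : G.dist u v0 ≠ 1 := by
        intro h; exact hu2 (SimpleGraph.dist_eq_one_iff_adj.mp h).symm
      omega
    set a := par u hu1 with ha
    have hadj_a : G.Adj a u := hparAdj u hu1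
    have hda : G.dist a v0 + 1 = G.dist u v0 := hparDist u hu1
    have ha1 : a ≠ v0 := by
      intro h
      rw [h, SimpleGraph.dist_self] at hda
      omega
    set b := par a ha1 with hb
    have hadj_b : G.Adj b a := hparAdj a ha1
    have hdb : G.dist b v0 + 1 = G.dist a v0 := hparDist a ha1
    refine ⟨a, b, hadj_a, hadj_b, ?_, hda, by omega⟩
    intro h
    rw [h] at hdb
    omega
  choose pa pb hpaAdj hpbAdj hpbNe hpaDist hpbDist using hTprop
  -- the encoding
  set K := V × (↑(G.neighborFinset v0) ↪ Fin Δ) × (↑(Sᶜ : Finset V) → Fin (Δ - 1)) with hK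
  have hcode2 : ∀ (φ : G ≃g G) (u : ↑(G.neighborFinset v0)),
      (G.neighborFinset (φ v0)).toList.idxOf (φ u) < Δ := by
    intro φ u
    have hmem : (φ : V → V) u ∈ (G.neighborFinset (φ v0)).toList := by
      rw [mem_toList, hmemNF]
      exact φ.map_adj_iff.mpr ((hmemNF _ _).mp u.2)
    have := List.idxOf_lt_length_iff.mpr hmem
    rwa [Finset.length_toList, SimpleGraph.card_neighborFinset_eq_degree,
      aut_degree_eq, ← hv0] at this
  have hcode3 : ∀ (φ : G ≃g G) (u : ↑(Sᶜ : Finset V)),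
      ((G.neighborFinset (φ (pa u.1 u.2))).erase (φ (pb u.1 u.2))).toList.idxOf (φ u.1)
        < Δ - 1 := by
    intro φ u
    have hmem : (φ : V → V) u.1 ∈
        ((G.neighborFinset (φ (pa u.1 u.2))).erase (φ (pb u.1 u.2))).toList := by
      rw [mem_toList, Finset.mem_erase]
      constructor
      · exact fun h => hpbNe u.1 u.2 (φ.injective h).symm
      · rw [hmemNF]
        exact φ.map_adj_iff.mpr (hpaAdj u.1 u.2)
    have hlt := List.idxOf_lt_length_iff.mpr hmem
    rw [Finset.length_toList] at hlt
    have hcard : ((G.neighborFinset (φ (pa u.1 u.2))).erase (φ (pb u.1 u.2))).card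
        = G.degree (φ (pa u.1 u.2)) - 1 := by
      rw [Finset.card_erase_of_mem, SimpleGraph.card_neighborFinset_eq_degree]
      rw [hmemNF]
      exact φ.map_adj_iff.mpr (hpbAdj u.1 u.2).symm
    rw [hcard] at hlt
    have hle : G.degree (φ (pa u.1 u.2)) ≤ Δ := G.degree_le_maxDegree _
    omega
  set enc : (G ≃g G) → K := fun φ =>
    ⟨φ v0,
      ⟨fun u => ⟨(G.neighborFinset (φ v0)).toList.idxOf (φ u), hcode2 φ u⟩, by
        intro a b hab
        have h1 : (φ : V → V) a ∈ (G.neighborFinset (φ v0)).toList := by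
          rw [mem_toList, hmemNF]
          exact φ.map_adj_iff.mpr ((hmemNF _ _).mp a.2)
        have h2 : (φ : V → V) b ∈ (G.neighborFinset (φ v0)).toList := by
          rw [mem_toList, hmemNF]
          exact φ.map_adj_iff.mpr ((hmemNF _ _).mp b.2)
        have := (List.idxOf_inj h1).mp (congrArg Fin.val hab)
        exact Subtype.ext (φ.injective this)⟩,
      fun u => ⟨_, hcode3 φ u⟩⟩ with henc
  have hinj : Function.Injective enc := by
    intro φ ψ h
    rw [henc] at h
    have h1 : φ v0 = ψ v0 := congrArg Prod.fst h
    have h2 : ∀ (u : ↑(G.neighborFinset v0)),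
        (G.neighborFinset (φ v0)).toList.idxOf (φ u)
          = (G.neighborFinset (ψ v0)).toList.idxOf (ψ u) :=
      fun u => congrArg Fin.val (DFunLike.congr_fun (congrArg (fun x => x.2.1) h) u)
    have h3 : ∀ (u : ↑(Sᶜ : Finset V)),
        ((G.neighborFinset (φ (pa u.1 u.2))).erase (φ (pb u.1 u.2))).toList.idxOf (φ u.1)
          = ((G.neighborFinset (ψ (pa u.1 u.2))).erase (ψ (pb u.1 u.2))).toList.idxOf (ψ u.1) :=
      fun u => congrArg Fin.val (congrFun (congrArg (fun x => x.2.2) h) u)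
    have key : ∀ k : ℕ, ∀ u : V, G.dist u v0 = k → φ u = ψ u := by
      intro k
      induction k using Nat.strong_induction_on with
      | _ k ih =>
        intro u hk
        by_cases h0 : u = v0
        · rw [h0]; exact h1
        by_cases hadj : G.Adj v0 u
        · -- u is a neighbor of v0
          have hu : u ∈ G.neighborFinset v0 := (hmemNF _ _).mpr hadj
          have this := h2 ⟨u, hu⟩
          have hmφ : (φ : V → V) u ∈ (G.neighborFinset (φ v0)).toList := by
            rw [mem_toList, hmemNF]
            exact φ.map_adj_iff.mpr hadj
          have hmψ : (ψ : V → V) u ∈ (G.neighborFinset (φ v0)).toList := by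
            rw [mem_toList, hmemNF, h1]
            exact ψ.map_adj_iff.mpr hadj
          rw [← h1] at this
          exact (List.idxOf_inj hmφ).mp this
        · -- u is outside S
          have huS : u ∈ Sᶜ := by
            rw [mem_compl, hS, mem_insert, not_or, hmemNF]
            exact ⟨h0, hadj⟩
          have hdpa : G.dist (pa u huS) v0 + 1 = k := by rw [← hk]; exact hpaDist u huS
          have hdpb : G.dist (pb u huS) v0 + 2 = k := by rw [← hk]; exact hpbDist u huS
          have hfa : φ (pa u huS) = ψ (pa u huS) := ih _ (by omega) _ rfl
          have hfb : φ (pb u huS) = ψ (pb u huS) := ih _ (by omega) _ rfl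
          have hval := h3 ⟨u, huS⟩
          have hmφ : (φ : V → V) u ∈
              ((G.neighborFinset (φ (pa u huS))).erase (φ (pb u huS))).toList := by
            rw [mem_toList, Finset.mem_erase]
            refine ⟨fun hh => hpbNe u huS (φ.injective hh).symm, ?_⟩
            rw [hmemNF]
            exact φ.map_adj_iff.mpr (hpaAdj u huS)
          have hmψ : (ψ : V → V) u ∈
              ((G.neighborFinset (φ (pa u huS))).erase (φ (pb u huS))).toList := by
            rw [hfa, hfb, mem_toList, Finset.mem_erase]
            refine ⟨fun hh => hpbNe u huS (ψ.injective hh).symm, ?_⟩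
            rw [hmemNF]
            exact ψ.map_adj_iff.mpr (hpaAdj u huS)
          have hval' : ((G.neighborFinset (φ (pa u huS))).erase
              (φ (pb u huS))).toList.idxOf ((φ : V → V) u)
              = ((G.neighborFinset (φ (pa u huS))).erase
              (φ (pb u huS))).toList.idxOf ((ψ : V → V) u) := by
            rw [hval, hfa, hfb]
          exact (List.idxOf_inj hmφ).mp hval'
    exact RelIso.ext fun u => key _ u rfl
  -- counting
  have hcard : Nat.card (G ≃g G) ≤ Nat.card K := Nat.card_le_card_of_injective enc hinj
  have hNv0 : Fintype.card ↑(G.neighborFinset v0) = Δ := by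
    rw [Fintype.card_coe, SimpleGraph.card_neighborFinset_eq_degree, ← hv0]
  have hScard : S.card = Δ + 1 := by
    rw [hS, Finset.card_insert_of_notMem (G.notMem_neighborFinset_self v0),
      SimpleGraph.card_neighborFinset_eq_degree, ← hv0]
  have hTcard : Fintype.card ↑(Sᶜ : Finset V) = Fintype.card V - Δ - 1 := by
    rw [Fintype.card_coe, Finset.card_compl, hScard]
    omega
  have hKcard : Nat.card K =
      Fintype.card V * Nat.factorial Δ * (Δ - 1) ^ (Fintype.card V - Δ - 1) := by
    rw [hK, Nat.card_eq_fintype_card, Fintype.card_prod, Fintype.card_prod,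
      Fintype.card_embedding_eq, Fintype.card_fun, hNv0, hTcard, Fintype.card_fin,
      Fintype.card_fin, Nat.descFactorial_self, mul_assoc]
  rw [hKcard] at hcard
  exact hcard
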